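/- Let X : ℝ^N → ℝ^N be a vector field satisfying ‖X(x) − X(y)‖ ≤ L‖x − y‖ for all x, y ∈ ℝ^N, let η ∈ ℝ, and let v : ℝ → ℝ^N be a nonconstant differentiable 1-periodic solution of v'(t) = η X(v(t)). Then |η| · L ≥ 2π. -/

import Mathlib

open MeasureTheory Real Complex intervalIntegral AddCircle
open scoped ENNReal

instance fact_zero_lt_one_real' : Fact ((0:ℝ) < 1) := ⟨one_pos⟩

lemma parseval_periodic (f : ℝ → ℂ) (hf : Continuous f) (hp : Function.Periodic f 1) :
    (Summable fun n : ℤ => ‖fourierCoeffOn (by norm_num : (0:ℝ) < 1) f n‖ ^ 2) ∧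
    ∑' n : ℤ, ‖fourierCoeffOn (by norm_num : (0:ℝ) < 1) f n‖ ^ 2
      = ∫ t in (0:ℝ)..1, ‖f t‖ ^ 2 := by
  have hFc : Continuous hp.lift := by
    have : Continuous ((hp.lift) ∘ (QuotientAddGroup.mk : ℝ → AddCircle (1:ℝ))) := by
      convert hf using 1; funext x; exact hp.lift_coe x
    exact (isQuotientMap_quotient_mk'.continuous_iff).mpr this
  set Fc : C(AddCircle (1:ℝ), ℂ) := ⟨hp.lift, hFc⟩ with hFcdef
  have key := tsum_sq_fourierCoeff (ContinuousMap.toLp (E := ℂ) 2 haarAddCircle ℂ Fc)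
  have hcoeff : ∀ n : ℤ, fourierCoeff (ContinuousMap.toLp (E := ℂ) 2 haarAddCircle ℂ Fc) n
      = fourierCoeffOn (by norm_num : (0:ℝ) < 1) f n := by
    intro n
    rw [fourierCoeff_toLp, fourierCoeffOn_eq_integral, fourierCoeff_eq_intervalIntegral _ n 0]
    norm_num
    apply intervalIntegral.integral_congr
    intro x _
    simp [Fc, hp.lift_coe]
  have hint : (∫ t : AddCircle (1:ℝ), ‖(ContinuousMap.toLp (E := ℂ) 2 haarAddCircle ℂ Fc) t‖ ^ 2 ∂haarAddCircle)
      = ∫ t in (0:ℝ)..1, ‖f t‖ ^ 2 := by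
    rw [integral_congr_ae ((ContinuousMap.coeFn_toLp haarAddCircle Fc).mono
      (fun x hx => by rw [hx]))]
    have h1 : (volume : Measure (AddCircle (1:ℝ))) = haarAddCircle := by
      rw [volume_eq_smul_haarAddCircle]; simp
    have := AddCircle.intervalIntegral_preimage (1:ℝ) 0 (fun x => ‖Fc x‖ ^ 2)
    rw [zero_add] at this
    rw [← h1, ← this]
    apply intervalIntegral.integral_congr
    intro x _
    simp [Fc, hp.lift_coe]
  constructor
  · have hm := lp.memℓp (fourierBasis.repr (ContinuousMap.toLp (E := ℂ) 2 haarAddCircle ℂ Fc))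
    have hs := (memℓp_gen_iff (by norm_num : 0 < (2:ℝ≥0∞).toReal)).1 hm
    refine hs.congr fun i => ?_
    rw [ENNReal.toReal_ofNat, show ((2:ℝ)) = ((2:ℕ):ℝ) by norm_num, Real.rpow_natCast,
      fourierBasis_repr, hcoeff i]
  · rw [← hint, ← key]
    exact tsum_congr fun n => by rw [hcoeff]

lemma wirtinger_c (f f' : ℝ → ℂ) (hd : ∀ t, HasDerivAt f (f' t) t)
    (hc' : Continuous f') (hp : Function.Periodic f 1)
    (hmean : ∫ t in (0:ℝ)..1, f t = 0) :
    ∫ t in (0:ℝ)..1, ‖f t‖^2 ≤ (1/(2*π))^2 * ∫ t in (0:ℝ)..1, ‖f' t‖^2 := by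
  have h01 : (0:ℝ) < 1 := by norm_num
  have hfc : Continuous f := continuous_iff_continuousAt.mpr fun t => (hd t).continuousAt
  -- periodicity of f'
  have hp' : Function.Periodic f' 1 := by
    intro t
    have hg : HasDerivAt (fun r : ℝ => r + 1) 1 t := (hasDerivAt_id t).add_const 1
    have h1 : HasDerivAt (fun r => f (r + 1)) ((1:ℝ) • f' (t + 1)) t :=
      (hd (t + 1)).scomp t hg
    have h2 : (fun r => f (r + 1)) = f := funext fun r => hp r
    rw [h2, one_smul] at h1
    exact h1.unique (hd t)
  -- coefficient relation
  have hrel : ∀ n : ℤ, n ≠ 0 →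
      fourierCoeffOn h01 f n = 1 / (2 * π * I * n) * fourierCoeffOn h01 f' n := by
    intro n hn
    have := fourierCoeffOn_of_hasDerivAt h01 hn
      (fun x _ => hd x) (hc'.intervalIntegrable 0 1)
    have hf10 : f 1 = f 0 := by simpa using hp 0
    rw [hf10] at this
    simp only [sub_self, mul_zero, zero_sub] at this
    rw [this]
    push_cast
    field_simp
    ring
  have hnorm : ∀ n : ℤ, n ≠ 0 →
      ‖fourierCoeffOn h01 f n‖ = ‖fourierCoeffOn h01 f' n‖ / (2 * π * |(n:ℝ)|) := by
    intro n hn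
    rw [hrel n hn, norm_mul]
    have : ‖(1:ℂ) / (2 * π * I * n)‖ = 1 / (2 * π * |(n:ℝ)|) := by
      rw [norm_div, norm_one]
      simp [norm_mul, abs_of_pos Real.pi_pos, Complex.norm_intCast]
    rw [this]; ring
  have hzero : fourierCoeffOn h01 f 0 = 0 := by
    rw [fourierCoeffOn_eq_integral]
    simpa using hmean
  obtain ⟨hs', hps'⟩ := parseval_periodic f' hc' hp'
  obtain ⟨hsf, hpsf⟩ := parseval_periodic f hfc hp
  have hb : ∀ n : ℤ, ‖fourierCoeffOn h01 f n‖ ^ 2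
      ≤ (1/(2*π))^2 * ‖fourierCoeffOn h01 f' n‖ ^ 2 := by
    intro n
    by_cases hn : n = 0
    · subst hn
      rw [hzero]
      simp only [norm_zero, ne_eq, OfNat.ofNat_ne_zero, not_false_eq_true, zero_pow]
      positivity
    · rw [hnorm n hn, div_pow]
      have h1 : (1:ℝ) ≤ |(n:ℝ)| := by
        rw [← Int.cast_abs]
        exact_mod_cast Int.one_le_abs hn
      have h2 : (2*π)^2 ≤ (2 * π * |(n:ℝ)|)^2 := by
        have : 2*π ≤ 2*π*|(n:ℝ)| := by nlinarith [Real.pi_pos]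
        nlinarith [Real.pi_pos]
      rw [div_le_iff₀ (by positivity)]
      rw [div_pow, one_pow, div_mul_eq_mul_div, div_mul_eq_mul_div, le_div_iff₀ (by positivity)]
      nlinarith [norm_nonneg (fourierCoeffOn h01 f' n), sq_nonneg (fourierCoeffOn h01 f' n).re]
  calc ∫ t in (0:ℝ)..1, ‖f t‖^2 = ∑' n : ℤ, ‖fourierCoeffOn h01 f n‖ ^ 2 := hpsf.symm
    _ ≤ ∑' n : ℤ, (1/(2*π))^2 * ‖fourierCoeffOn h01 f' n‖ ^ 2 :=
        hsf.tsum_le_tsum hb (hs'.mul_left _)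
    _ = (1/(2*π))^2 * ∑' n : ℤ, ‖fourierCoeffOn h01 f' n‖ ^ 2 := tsum_mul_left
    _ = (1/(2*π))^2 * ∫ t in (0:ℝ)..1, ‖f' t‖^2 := by rw [hps']

lemma wirtinger_vec {N : ℕ} (u u' : ℝ → EuclideanSpace ℝ (Fin N))
    (hd : ∀ t, HasDerivAt u (u' t) t) (hc' : Continuous u')
    (hp : Function.Periodic u 1) (hmean : ∫ t in (0:ℝ)..1, u t = 0) :
    ∫ t in (0:ℝ)..1, ‖u t‖^2 ≤ (1/(2*π))^2 * ∫ t in (0:ℝ)..1, ‖u' t‖^2 := by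
  set Lm : Fin N → (EuclideanSpace ℝ (Fin N) →L[ℝ] ℂ) :=
    fun i => Complex.ofRealCLM.comp (EuclideanSpace.proj i) with hLm
  have hcu : Continuous u := continuous_iff_continuousAt.mpr fun t => (hd t).continuousAt
  have hnormsq : ∀ x : EuclideanSpace ℝ (Fin N), ‖x‖^2 = ∑ i, ‖(Lm i) x‖^2 := by
    intro x
    rw [EuclideanSpace.norm_eq, Real.sq_sqrt (by positivity)]
    refine Finset.sum_congr rfl fun i _ => ?_
    simp [Lm, Complex.norm_real, sq_abs]
  have key : ∀ i : Fin N, ∫ t in (0:ℝ)..1, ‖(Lm i) (u t)‖^2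
      ≤ (1/(2*π))^2 * ∫ t in (0:ℝ)..1, ‖(Lm i) (u' t)‖^2 := by
    intro i
    refine wirtinger_c (fun t => (Lm i) (u t)) (fun t => (Lm i) (u' t))
      (fun t => ((Lm i).hasFDerivAt.comp_hasDerivAt t (hd t)))
      ((Lm i).continuous.comp hc') (fun t => by simp [hp t]) ?_
    rw [ContinuousLinearMap.intervalIntegral_comp_comm (Lm i)
      (hcu.intervalIntegrable 0 1), hmean, map_zero]
  have hint : ∀ (w : ℝ → EuclideanSpace ℝ (Fin N)), Continuous w →
      ∫ t in (0:ℝ)..1, ‖w t‖^2 = ∑ i, ∫ t in (0:ℝ)..1, ‖(Lm i) (w t)‖^2 := by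
    intro w hw
    rw [← intervalIntegral.integral_finset_sum]
    · exact intervalIntegral.integral_congr fun t _ => hnormsq (w t)
    · intro i _
      exact (((Lm i).continuous.comp hw).norm.pow 2).intervalIntegrable 0 1
  rw [hint u hcu, hint u' hc', Finset.mul_sum]
  exact Finset.sum_le_sum fun i _ => key i

theorem stmt_12 (N : ℕ) (X : EuclideanSpace ℝ (Fin N) → EuclideanSpace ℝ (Fin N))
    (L : ℝ) (hX : ∀ x y, ‖X x - X y‖ ≤ L * ‖x - y‖)
    (η : ℝ) (v : ℝ → EuclideanSpace ℝ (Fin N))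
    (hv : ∀ t, HasDerivAt v (η • X (v t)) t)
    (hper : ∀ t, v (t + 1) = v t)
    (hnc : ∃ s t : ℝ, v s ≠ v t) :
    2 * Real.pi ≤ |η| * L := by
  obtain ⟨s, t, hst⟩ := hnc
  rcases Nat.eq_zero_or_pos N with hN | hN
  · subst hN
    exact absurd (Subsingleton.elim _ _) hst
  have hL0 : 0 ≤ L := by
    have h1 := hX (EuclideanSpace.single ⟨0, hN⟩ 1) 0
    rw [sub_zero, EuclideanSpace.norm_single] at h1
    simp only [norm_one, mul_one] at h1
    exact le_trans (norm_nonneg _) h1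
  have hcv : Continuous v := continuous_iff_continuousAt.mpr fun r => (hv r).continuousAt
  have hXc : Continuous X := by
    have : LipschitzWith L.toNNReal X := by
      apply LipschitzWith.of_dist_le_mul
      intro x y
      rw [dist_eq_norm, dist_eq_norm, Real.coe_toNNReal L hL0]
      exact hX x y
    exact this.continuous
  set h : ℝ := t - s with hh
  set u : ℝ → EuclideanSpace ℝ (Fin N) := fun r => v (r + h) - v r with hu
  set u' : ℝ → EuclideanSpace ℝ (Fin N) :=
    fun r => η • X (v (r + h)) - η • X (v r) with hu'
  have hdu : ∀ r, HasDerivAt u (u' r) r := by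
    intro r
    have h1 : HasDerivAt (fun x : ℝ => v (x + h)) ((1:ℝ) • (η • X (v (r + h)))) r :=
      (hv (r + h)).scomp r ((hasDerivAt_id r).add_const h)
    rw [one_smul] at h1
    exact h1.sub (hv r)
  have hcu' : Continuous u' :=
    ((hXc.comp (hcv.comp (continuous_add_right h))).const_smul η).sub
      ((hXc.comp hcv).const_smul η)
  have hpv : Function.Periodic v 1 := hper
  have hpu : Function.Periodic u 1 := by
    intro r
    simp only [hu]
    rw [add_right_comm, hper (r + h), hper r]
  have hc1 : Continuous (fun r : ℝ => v (r + h)) := hcv.comp (continuous_add_right h)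
  have hcu : Continuous u := hc1.sub hcv
  have hmean : ∫ r in (0:ℝ)..1, u r = 0 := by
    have hi1 : IntervalIntegrable (fun r : ℝ => v (r + h)) MeasureTheory.volume 0 1 :=
      hc1.intervalIntegrable 0 1
    rw [hu, intervalIntegral.integral_sub hi1 (hcv.intervalIntegrable 0 1)]
    have h2 : ∫ r in (0:ℝ)..1, v (r + h) = ∫ r in h..(1+h), v r := by
      simpa using intervalIntegral.integral_comp_add_right (a := (0:ℝ)) (b := 1) v h
    rw [h2, sub_eq_zero]
    have := hpv.intervalIntegral_add_eq h 0
    simpa [add_comm] using this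
  have W := wirtinger_vec u u' hdu hcu' hpu hmean
  -- pointwise bound
  have hptw : ∀ r, ‖u' r‖^2 ≤ (|η| * L)^2 * ‖u r‖^2 := by
    intro r
    have h1 : ‖u' r‖ ≤ |η| * L * ‖u r‖ := by
      simp only [hu']
      rw [← smul_sub, norm_smul, Real.norm_eq_abs]
      calc |η| * ‖X (v (r + h)) - X (v r)‖ ≤ |η| * (L * ‖v (r + h) - v r‖) :=
            mul_le_mul_of_nonneg_left (hX _ _) (abs_nonneg η)
        _ = |η| * L * ‖u r‖ := by simp only [hu]; ring
    nlinarith [norm_nonneg (u' r), norm_nonneg (u r), abs_nonneg η]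
  have hI' : ∫ r in (0:ℝ)..1, ‖u' r‖^2 ≤ (|η| * L)^2 * ∫ r in (0:ℝ)..1, ‖u r‖^2 := by
    rw [← intervalIntegral.integral_const_mul]
    apply intervalIntegral.integral_mono_on (by norm_num)
      ((hcu'.norm.pow 2).intervalIntegrable 0 1)
      ((continuous_const.mul (hcu.norm.pow 2)).intervalIntegrable 0 1)
    exact fun x _ => hptw x
  have hus : u s ≠ 0 := by
    simp only [hu, hh]
    rw [add_sub_cancel]
    exact sub_ne_zero.mpr (Ne.symm hst)
  have hx0 : u (Int.fract s) = u s := by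
    have h2 := hpu.sub_int_mul_eq (x := s) ⌊s⌋
    rw [mul_one] at h2
    rw [Int.fract]
    exact h2
  have hIpos : 0 < ∫ r in (0:ℝ)..1, ‖u r‖^2 := by
    apply intervalIntegral.integral_pos (by norm_num) ((hcu.norm.pow 2).continuousOn)
      (fun x _ => by show 0 ≤ ‖u x‖^2; positivity)
    exact ⟨Int.fract s, ⟨Int.fract_nonneg s, (Int.fract_lt_one s).le⟩, by
      show 0 < ‖u (Int.fract s)‖^2; rw [hx0]; exact pow_pos (norm_pos_iff.mpr hus) 2⟩
  have hc0 : (0:ℝ) ≤ (1/(2*π))^2 := by positivity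
  have hchain : ∫ r in (0:ℝ)..1, ‖u r‖^2
      ≤ (1/(2*π))^2 * ((|η| * L)^2 * ∫ r in (0:ℝ)..1, ‖u r‖^2) :=
    le_trans W (mul_le_mul_of_nonneg_left hI' hc0)
  have hpi := Real.pi_pos
  have hsq : (2*π)^2 ≤ (|η| * L)^2 := by
    have h4 : (1:ℝ) ≤ (1/(2*π))^2 * (|η| * L)^2 := by
      have h5 : (1:ℝ) * (∫ r in (0:ℝ)..1, ‖u r‖^2)
          ≤ ((1/(2*π))^2 * (|η| * L)^2) * (∫ r in (0:ℝ)..1, ‖u r‖^2) := by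
        rw [one_mul, mul_assoc]
        exact hchain
      exact le_of_mul_le_mul_right h5 hIpos
    have key : (2*π)^2 * (1/(2*π))^2 = 1 := by field_simp
    nlinarith [mul_le_mul_of_nonneg_left h4 (sq_nonneg (2*π))]
  calc 2 * π = Real.sqrt ((2*π)^2) := (Real.sqrt_sq (by positivity)).symm
    _ ≤ Real.sqrt ((|η| * L)^2) := Real.sqrt_le_sqrt hsq
    _ = |η| * L := Real.sqrt_sq (by positivity)
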